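/- Let d ≥ 1 be an integer, μ a Borel probability measure on [0,1]^d, and δ > 0. Then h(μ,δ) = liminf_{m→∞} (log₂ h*_{m,δ}(μ))/m. -/

import Mathlib

open MeasureTheory Filter Set
open scoped ENNReal NNReal

/-- The support of a measure on `ℝ^d`: points all of whose closed balls have positive measure. -/
def msupport (d : ℕ) (μ : Measure (Fin d → ℝ)) : Set (Fin d → ℝ) :=
  {x | ∀ r : ℝ, 0 < r → 0 < μ (Metric.closedBall x r)}

/-- `h(μ,δ)`: the supremum of exponents `s` admissible for the lower (quasi-)Assouad condition. -/
noncomputable def hfun (d : ℕ) (μ : Measure (Fin d → ℝ)) (δ : ℝ) : ℝ≥0∞ :=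
  ⨆ (s : ℝ) (_ : ∃ C : ℝ, 0 < C ∧ ∀ x ∈ msupport d μ, ∀ r R : ℝ,
      0 < r → r < R ^ (1 + δ) → R ^ (1 + δ) < R → R < 1 →
      ENNReal.ofReal (C * (R / r) ^ s) ≤ μ (Metric.closedBall x R) / μ (Metric.closedBall x r)),
    ENNReal.ofReal s

/-- The affine map `y ↦ (1/l) • y + u` (magnification of a hypercube of side `l`). -/
noncomputable def miniMap (d : ℕ) (l : ℝ) (u : Fin d → ℝ) : (Fin d → ℝ) → (Fin d → ℝ) :=
  fun y => l⁻¹ • y + u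

/-- The mini-measure of `μ` associated to the affine map `y ↦ (1/l) • y + u`:
the normalized restriction to `[0,1]^d` of the pushforward of `μ`. -/
noncomputable def miniMeasure (d : ℕ) (μ : Measure (Fin d → ℝ)) (l : ℝ) (u : Fin d → ℝ) :
    Measure (Fin d → ℝ) :=
  ((μ.map (miniMap d l u)) (Set.Icc 0 1))⁻¹ • ((μ.map (miniMap d l u)).restrict (Set.Icc 0 1))

/-- One of the `2^d` central closed hypercubes of side `2^{-m}` in `[0,1]^d`
(the closed dyadic hypercubes of generation `m` containing the center `(1/2,...,1/2)`),
indexed by `ε : Fin d → Bool`. -/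
noncomputable def centralCube (d m : ℕ) (ε : Fin d → Bool) : Set (Fin d → ℝ) :=
  Set.Icc (fun i => if ε i then (1 : ℝ) / 2 else 1 / 2 - ((2 : ℝ) ^ m)⁻¹)
    (fun i => if ε i then (1 : ℝ) / 2 + ((2 : ℝ) ^ m)⁻¹ else 1 / 2)

/-- `M_m(μ')`: the maximal `μ'`-measure of the `2^d` central hypercubes of side `2^{-m}`. -/
noncomputable def Mctr (d : ℕ) (μ' : Measure (Fin d → ℝ)) (m : ℕ) : ℝ≥0∞ :=
  ⨆ ε : Fin d → Bool, μ' (centralCube d m ε)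

/-- `h*_{m,δ}(μ)`: infimum of `1 / M_m(μ')` over mini-measures `μ'` of `μ` arising from a
hypercube of side length `l > 2 · 2^{-m/δ}` with `M_m(μ') ≠ 0`. -/
noncomputable def hstar (d : ℕ) (μ : Measure (Fin d → ℝ)) (δ : ℝ) (m : ℕ) : ℝ≥0∞ :=
  ⨅ (l : ℝ) (u : Fin d → ℝ)
    (_ : 0 < l ∧ l ≤ 1 ∧ 2 * (2 : ℝ) ^ (-(m : ℝ) / δ) < l ∧
      0 < (μ.map (miniMap d l u)) (Set.Icc 0 1) ∧ Mctr d (miniMeasure d μ l u) m ≠ 0),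
    (Mctr d (miniMeasure d μ l u) m)⁻¹

noncomputable def log2 (y : ℝ≥0∞) : ℝ≥0∞ :=
  if y = ⊤ then ⊤ else ENNReal.ofReal (Real.logb 2 y.toReal)


variable {d : ℕ} {μ : Measure (Fin d → ℝ)} {l δ : ℝ} {u : Fin d → ℝ}

lemma closedBall_eq_Icc' (x : Fin d → ℝ) {r : ℝ} (hr : 0 ≤ r) :
    Metric.closedBall x r = Icc (fun i => x i - r) (fun i => x i + r) := by
  rw [closedBall_pi x hr, ← Set.pi_univ_Icc]
  simp [Real.closedBall_eq_Icc]

lemma exists_msupport {A : Set (Fin d → ℝ)} (hA : μ A ≠ 0) : ∃ y ∈ A, y ∈ msupport d μ := by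
  obtain ⟨y, hyA, hy⟩ := MeasureTheory.exists_mem_forall_mem_nhdsWithin_pos_measure (μ := μ) hA
  exact ⟨y, hyA, fun r hr => hy _ (mem_nhdsWithin_of_mem_nhds (Metric.closedBall_mem_nhds y hr))⟩

lemma measurable_miniMap' : Measurable (miniMap d l u) :=
  (measurable_id.const_smul l⁻¹).add_const u

lemma miniMap_preimage_Icc (hl : 0 < l) (p q : Fin d → ℝ) :
    miniMap d l u ⁻¹' Icc p q = Icc (fun i => l * (p i - u i)) (fun i => l * (q i - u i)) := by
  have key1 : ∀ a b c : ℝ, (a ≤ l⁻¹ * b + c) ↔ (l * (a - c) ≤ b) := by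
    intro a b c
    rw [← sub_le_iff_le_add, inv_mul_eq_div, le_div_iff₀ hl, mul_comm]
  have key2 : ∀ a b c : ℝ, (l⁻¹ * b + c ≤ a) ↔ (b ≤ l * (a - c)) := by
    intro a b c
    rw [← le_sub_iff_add_le, inv_mul_eq_div, div_le_iff₀ hl, mul_comm]
  ext y
  simp only [miniMap, mem_preimage, mem_Icc, Pi.le_def, Pi.add_apply, Pi.smul_apply,
    smul_eq_mul]
  constructor
  · rintro ⟨h1, h2⟩
    exact ⟨fun i => (key1 _ _ _).1 (h1 i), fun i => (key2 _ _ _).1 (h2 i)⟩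
  · rintro ⟨h1, h2⟩
    exact ⟨fun i => (key1 _ _ _).2 (h1 i), fun i => (key2 _ _ _).2 (h2 i)⟩

lemma map_miniMap_apply {A : Set (Fin d → ℝ)} (hA : MeasurableSet A) :
    (μ.map (miniMap d l u)) A = μ (miniMap d l u ⁻¹' A) :=
  Measure.map_apply measurable_miniMap' hA

lemma miniMeasure_apply {A : Set (Fin d → ℝ)} (hA : MeasurableSet A) (hA' : A ⊆ Icc 0 1) :
    miniMeasure d μ l u A = (μ (miniMap d l u ⁻¹' Icc 0 1))⁻¹ * μ (miniMap d l u ⁻¹' A) := by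
  rw [miniMeasure, Measure.smul_apply, Measure.restrict_apply hA,
    Set.inter_eq_self_of_subset_left hA', map_miniMap_apply hA,
    map_miniMap_apply measurableSet_Icc, smul_eq_mul]

lemma two_pow_inv_le_half {m : ℕ} (hm : 1 ≤ m) : ((2 : ℝ) ^ m)⁻¹ ≤ 1 / 2 := by
  rw [inv_le_comm₀ (by positivity) (by norm_num)]
  calc (1 / 2 : ℝ)⁻¹ = 2 ^ (1 : ℕ) := by norm_num
  _ ≤ 2 ^ m := by exact pow_le_pow_right₀ (by norm_num) hm

lemma centralCube_subset_Icc {m : ℕ} (hm : 1 ≤ m) (ε : Fin d → Bool) :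
    centralCube d m ε ⊆ Icc 0 1 := by
  have h2 := two_pow_inv_le_half hm
  have h0 : (0:ℝ) < ((2 : ℝ) ^ m)⁻¹ := by positivity
  rintro z ⟨h1, h2'⟩
  constructor <;> intro i
  · have ha := h1 i
    simp only [Pi.zero_apply]
    dsimp only at ha
    split_ifs at ha <;> linarith
  · have ha := h2' i
    simp only [Pi.one_apply]
    dsimp only at ha
    split_ifs at ha <;> linarith

lemma mem_iUnion_centralCube {m : ℕ} {z : Fin d → ℝ}
    (hz : ∀ i, |z i - 1/2| ≤ ((2:ℝ) ^ m)⁻¹) : ∃ ε, z ∈ centralCube d m ε := by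
  refine ⟨fun i => decide ((1:ℝ)/2 ≤ z i), fun i => ?_, fun i => ?_⟩ <;>
    · have h1 := abs_le.1 (hz i)
      dsimp only
      split_ifs with hc
      · replace hc := of_decide_eq_true hc; linarith [h1.1, h1.2]
      · replace hc : ¬ ((1:ℝ)/2 ≤ z i) := fun h => hc (decide_eq_true h)
        push_neg at hc; linarith [h1.1, h1.2]

lemma exists_fin_step {σ : ℝ} (hσ : 0 ≤ σ) {n : ℕ} (hn : 0 < n) {t : ℝ} (h0 : 0 ≤ t)
    (h1 : t ≤ n * σ) : ∃ j : Fin n, σ * j ≤ t ∧ t ≤ σ * (j + 1) := by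
  by_cases hc : σ * ((n : ℝ) - 1) ≤ t
  · refine ⟨⟨n - 1, by omega⟩, ?_, ?_⟩
    · simpa [Nat.cast_sub hn] using hc
    · have : ((n : ℝ) - 1) + 1 = n := by ring
      simp only [Nat.cast_sub hn]
      push_cast [Nat.cast_sub hn]
      nlinarith
  · push_neg at hc
    have hσ' : 0 < σ := by
      rcases hσ.lt_or_eq with h | h
      · exact h
      · exfalso; rw [← h] at hc; simp at hc; linarith
    have hfr : 0 ≤ t / σ := div_nonneg h0 hσ
    have hj1 : (⌊t / σ⌋₊ : ℝ) ≤ t / σ := Nat.floor_le hfr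
    have hj2 : t / σ < ⌊t / σ⌋₊ + 1 := Nat.lt_floor_add_one _
    have hjn : ⌊t / σ⌋₊ < n := by
      have : t / σ < (n : ℝ) - 1 := by
        rw [div_lt_iff₀ hσ']; nlinarith
      have h2 : (⌊t / σ⌋₊ : ℝ) < (n : ℝ) - 1 := lt_of_le_of_lt hj1 this
      have : (⌊t / σ⌋₊ : ℝ) < (n : ℝ) := by linarith
      exact_mod_cast this
    refine ⟨⟨⌊t / σ⌋₊, hjn⟩, ?_, ?_⟩
    · simpa [mul_comm] using (le_div_iff₀ hσ').1 hj1
    · have := (div_lt_iff₀ hσ').1 hj2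
      simp only []
      nlinarith

lemma cube_subset_iUnion {a : Fin d → ℝ} {σ : ℝ} (hσ : 0 ≤ σ) {n : ℕ} (hn : 0 < n) :
    Icc a (fun i => a i + n * σ) ⊆
      ⋃ v : Fin d → Fin n, Icc (fun i => a i + σ * (v i)) (fun i => a i + σ * ((v i) + 1)) := by
  rintro z ⟨h1, h2⟩
  have : ∀ i, ∃ j : Fin n, σ * j ≤ z i - a i ∧ z i - a i ≤ σ * (j + 1) := fun i =>
    exists_fin_step hσ hn (by linarith [h1 i]) (by have h2' := h2 i; dsimp only at h2'; linarith)
  choose v hv using this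
  refine mem_iUnion.2 ⟨v, fun i => ?_, fun i => ?_⟩
  · show a i + σ * (v i) ≤ z i
    linarith [(hv i).1]
  · show z i ≤ a i + σ * ((v i) + 1)
    linarith [(hv i).2]

lemma measure_le_card_mul_max {α : Type*} [MeasurableSpace α] {ν : Measure α}
    {ι : Type*} [Fintype ι] [Nonempty ι] (S : ι → Set α) {A : Set α} (hA : A ⊆ ⋃ i, S i) :
    ∃ i, ν A ≤ (Fintype.card ι : ℝ≥0∞) * ν (S i) := by
  obtain ⟨i, hi⟩ := Finite.exists_max (fun i => ν (S i))
  refine ⟨i, ?_⟩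
  calc ν A ≤ ν (⋃ j, S j) := measure_mono hA
    _ ≤ ∑' j, ν (S j) := measure_iUnion_le _
    _ = ∑ j, ν (S j) := tsum_fintype _
    _ ≤ Fintype.card ι • ν (S i) := Finset.sum_le_card_nsmul _ _ _ (fun j _ => hi j)
    _ = (Fintype.card ι : ℝ≥0∞) * ν (S i) := by rw [nsmul_eq_mul]

section Dagger
variable [IsProbabilityMeasure μ]

lemma measure_ne_top' (A : Set (Fin d → ℝ)) : μ A ≠ ⊤ := measure_ne_top μ A

lemma dagger (hδ : 0 < δ) {t : ℝ} {m : ℕ} (hm : 1 ≤ m)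
    (hst : ENNReal.ofReal ((2:ℝ) ^ ((m:ℝ) * t)) ≤ hstar d μ δ m)
    {x : Fin d → ℝ} (hx : x ∈ msupport d μ) (hl0 : 0 < l) (hl1 : l ≤ 1)
    (hth : 2 * (2 : ℝ) ^ (-(m : ℝ) / δ) < l) :
    μ (Metric.closedBall x (l * ((2:ℝ) ^ m)⁻¹)) ≤
      (2 ^ d : ℝ≥0∞) * (ENNReal.ofReal ((2:ℝ) ^ ((m:ℝ) * t)))⁻¹ *
        μ (Metric.closedBall x (l / 2)) := by
  set u : Fin d → ℝ := fun i => 1/2 - l⁻¹ * x i with hu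
  have hl2 : (0:ℝ) < l / 2 := by linarith
  have hQ : miniMap d l u ⁻¹' (Icc 0 1) = Metric.closedBall x (l / 2) := by
    rw [miniMap_preimage_Icc hl0, closedBall_eq_Icc' x hl2.le]
    have e1 : (fun i => l * ((0 : Fin d → ℝ) i - u i)) = fun i => x i - l / 2 := by
      ext i; simp only [Pi.zero_apply, hu]; field_simp; ring
    have e2 : (fun i => l * ((1 : Fin d → ℝ) i - u i)) = fun i => x i + l / 2 := by
      ext i; simp only [Pi.one_apply, hu]; field_simp; ring
    rw [e1, e2]
  have hQ0 : μ (miniMap d l u ⁻¹' (Icc 0 1)) ≠ 0 := by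
    rw [hQ]; exact (hx _ hl2).ne'
  have hQtop : μ (miniMap d l u ⁻¹' (Icc 0 1)) ≠ ⊤ := measure_ne_top μ _
  -- the measure of preimages of central cubes
  have hν : ∀ ε : Fin d → Bool, miniMeasure d μ l u (centralCube d m ε) =
      (μ (miniMap d l u ⁻¹' (Icc 0 1)))⁻¹ * μ (miniMap d l u ⁻¹' centralCube d m ε) := by
    intro ε
    exact miniMeasure_apply measurableSet_Icc (centralCube_subset_Icc hm ε)
  have hμν : ∀ ε : Fin d → Bool, μ (miniMap d l u ⁻¹' centralCube d m ε) =
      μ (miniMap d l u ⁻¹' (Icc 0 1)) * miniMeasure d μ l u (centralCube d m ε) := by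
    intro ε
    rw [hν ε, ← mul_assoc, ENNReal.mul_inv_cancel hQ0 hQtop, one_mul]
  -- ball is inside union of preimages
  have hball : Metric.closedBall x (l * ((2:ℝ) ^ m)⁻¹) ⊆
      ⋃ ε : Fin d → Bool, miniMap d l u ⁻¹' centralCube d m ε := by
    intro z hz
    have hz' : ∀ i, |miniMap d l u z i - 1/2| ≤ ((2:ℝ) ^ m)⁻¹ := by
      intro i
      have h1 : dist z x ≤ l * ((2:ℝ) ^ m)⁻¹ := hz
      have h2 : dist (z i) (x i) ≤ l * ((2:ℝ) ^ m)⁻¹ :=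
        le_trans (dist_le_pi_dist z x i) h1
      have h3 : |z i - x i| ≤ l * ((2:ℝ) ^ m)⁻¹ := by rwa [Real.dist_eq] at h2
      have : miniMap d l u z i - 1/2 = l⁻¹ * (z i - x i) := by
        simp only [miniMap, Pi.add_apply, Pi.smul_apply, smul_eq_mul, hu]; ring
      rw [this, abs_mul, abs_of_pos (inv_pos.2 hl0)]
      calc l⁻¹ * |z i - x i| ≤ l⁻¹ * (l * ((2:ℝ) ^ m)⁻¹) := by
            exact mul_le_mul_of_nonneg_left h3 (inv_pos.2 hl0).le
        _ = ((2:ℝ) ^ m)⁻¹ := by field_simp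
    obtain ⟨ε, hε⟩ := mem_iUnion_centralCube hz'
    exact mem_iUnion.2 ⟨ε, hε⟩
  -- Mctr is nonzero
  have hMne : Mctr d (miniMeasure d μ l u) m ≠ 0 := by
    intro h0
    have hz : ∀ ε : Fin d → Bool, μ (miniMap d l u ⁻¹' centralCube d m ε) = 0 := by
      intro ε
      have : miniMeasure d μ l u (centralCube d m ε) = 0 :=
        le_antisymm (h0 ▸ le_iSup (fun ε => miniMeasure d μ l u (centralCube d m ε)) ε)
          (zero_le)
      rw [hμν ε, this, mul_zero]
    have : μ (Metric.closedBall x (l * ((2:ℝ) ^ m)⁻¹)) = 0 := by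
      refine measure_mono_null hball ?_
      exact measure_iUnion_null fun ε => hz ε
    exact absurd this (hx _ (by positivity)).ne'
  -- instantiate the infimum
  have hMle : Mctr d (miniMeasure d μ l u) m ≤ (ENNReal.ofReal ((2:ℝ) ^ ((m:ℝ) * t)))⁻¹ := by
    have hterm : ENNReal.ofReal ((2:ℝ) ^ ((m:ℝ) * t)) ≤
        (Mctr d (miniMeasure d μ l u) m)⁻¹ := by
      refine le_trans hst ?_
      refine iInf_le_of_le l (iInf_le_of_le u (iInf_le_of_le ?_ le_rfl))
      refine ⟨hl0, hl1, hth, ?_, hMne⟩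
      rw [map_miniMap_apply measurableSet_Icc]
      exact pos_iff_ne_zero.2 hQ0
    rw [← inv_inv (Mctr d (miniMeasure d μ l u) m)]
    exact ENNReal.inv_le_inv' hterm
  -- conclude
  calc μ (Metric.closedBall x (l * ((2:ℝ) ^ m)⁻¹))
      ≤ ∑' ε : Fin d → Bool, μ (miniMap d l u ⁻¹' centralCube d m ε) :=
        le_trans (measure_mono hball) (measure_iUnion_le _)
    _ = ∑ ε : Fin d → Bool, μ (miniMap d l u ⁻¹' centralCube d m ε) := tsum_fintype _
    _ ≤ ∑ _ε : Fin d → Bool, μ (miniMap d l u ⁻¹' (Icc 0 1)) * Mctr d (miniMeasure d μ l u) m := by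
        refine Finset.sum_le_sum fun ε _ => ?_
        rw [hμν ε]
        exact mul_le_mul_right (le_iSup (fun ε => miniMeasure d μ l u (centralCube d m ε)) ε) _
    _ = (2 ^ d : ℝ≥0∞) * (μ (miniMap d l u ⁻¹' (Icc 0 1)) * Mctr d (miniMeasure d μ l u) m) := by
        rw [Finset.sum_const, Finset.card_univ, nsmul_eq_mul]
        congr 1
        simp [Fintype.card_fun]
    _ ≤ (2 ^ d : ℝ≥0∞) * (μ (miniMap d l u ⁻¹' (Icc 0 1)) *
          (ENNReal.ofReal ((2:ℝ) ^ ((m:ℝ) * t)))⁻¹) := by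
        exact mul_le_mul_right (mul_le_mul_right hMle _) _
    _ = (2 ^ d : ℝ≥0∞) * (ENNReal.ofReal ((2:ℝ) ^ ((m:ℝ) * t)))⁻¹ *
          μ (Metric.closedBall x (l / 2)) := by
        rw [hQ]; ring

end Dagger

section Dir1
variable [IsProbabilityMeasure μ]

set_option maxHeartbeats 1600000 in
lemma Mctr_le (hδ : 0 < δ) {s C : ℝ} (hs : 0 < s) (hC : 0 < C)
    (H : ∀ x ∈ msupport d μ, ∀ r R : ℝ, 0 < r → r < R ^ (1 + δ) → R ^ (1 + δ) < R → R < 1 →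
      ENNReal.ofReal (C * (R / r) ^ s) ≤
        μ (Metric.closedBall x R) / μ (Metric.closedBall x r))
    {k : ℕ} (hk : δ + 2 ≤ (k : ℝ)) {m : ℕ} (hm : 2 ≤ m)
    (hl0 : 0 < l) (hl1 : l ≤ 1) (hth : 2 * (2 : ℝ) ^ (-(m : ℝ) / δ) < l)
    (hQ0 : μ (miniMap d l u ⁻¹' (Icc 0 1)) ≠ 0) :
    Mctr d (miniMeasure d μ l u) m ≤
      ENNReal.ofReal (((2:ℝ) ^ k) ^ d * C⁻¹ * (2:ℝ) ^ (-(((m:ℝ) + k - 2) * s))) := by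
  have hQtop : μ (miniMap d l u ⁻¹' (Icc 0 1)) ≠ ⊤ := measure_ne_top μ _
  have hm1 : 1 ≤ m := by omega
  set i2 : ℝ := ((2:ℝ) ^ m)⁻¹ with hi2
  have hi2pos : 0 < i2 := by positivity
  have hi2q : i2 ≤ 1 / 4 := by
    rw [hi2, inv_le_comm₀ (by positivity) (by norm_num)]
    calc ((1:ℝ)/4)⁻¹ = 2 ^ (2:ℕ) := by norm_num
    _ ≤ 2 ^ m := pow_le_pow_right₀ (by norm_num) hm
  -- threshold consequence : 2^{-m} < (l/2)^δ
  have hhalf : (2:ℝ) ^ (-(m:ℝ)/δ) < l / 2 := by linarith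
  have hld : i2 < (l / 2) ^ δ := by
    have h1 : ((2:ℝ) ^ (-(m:ℝ)/δ)) ^ δ < (l / 2) ^ δ :=
      Real.rpow_lt_rpow (Real.rpow_nonneg (by norm_num) _) hhalf hδ
    have h2 : ((2:ℝ) ^ (-(m:ℝ)/δ)) ^ δ = i2 := by
      rw [← Real.rpow_mul (by norm_num : (0:ℝ) ≤ 2), div_mul_cancel₀ _ hδ.ne', hi2,
        ← Real.rpow_natCast (2:ℝ) m, ← Real.rpow_neg (by norm_num : (0:ℝ) ≤ 2)]
    rwa [h2] at h1
  set n : ℕ := 2 ^ k with hn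
  have hnpos : 0 < n := by positivity
  have hnR : (n : ℝ) = (2:ℝ) ^ k := by rw [hn]; push_cast; ring
  have hnRpos : (0:ℝ) < n := by exact_mod_cast hnpos
  -- scales
  set r : ℝ := l * i2 / n with hr
  set R : ℝ := l * (1/2 - i2) with hR
  have hr0 : 0 < r := by positivity
  have hR0 : 0 < R := by
    have : (0:ℝ) < 1/2 - i2 := by linarith
    positivity
  have hR1 : R < 1 := by nlinarith
  have hRd : R ^ (1 + δ) < R := by
    have := Real.rpow_lt_rpow_of_exponent_gt hR0 hR1 (by linarith : (1:ℝ) < 1 + δ)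
    rwa [Real.rpow_one] at this
  have hRge : l / 4 ≤ R := by nlinarith
  -- r < R^{1+δ}
  have hrR : r < R ^ (1 + δ) := by
    have e1 : R ^ (1 + δ) = R * R ^ δ := by
      rw [Real.rpow_add hR0, Real.rpow_one]
    have e2 : (l/4 : ℝ) ^ δ = (l/2) ^ δ * (1/2) ^ δ := by
      rw [← Real.mul_rpow (by positivity) (by norm_num)]
      congr 1
      ring
    have e3 : ((1:ℝ)/2) ^ δ = (2:ℝ) ^ (-δ) := by
      rw [Real.rpow_neg (by norm_num : (0:ℝ) ≤ 2), ← Real.inv_rpow (by norm_num : (0:ℝ) ≤ 2)]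
      norm_num
    have h4 : (l/4 : ℝ) ^ δ ≤ R ^ δ := Real.rpow_le_rpow (by positivity) hRge hδ.le
    have h5 : i2 * (2:ℝ) ^ (-δ) < (l/4) ^ δ := by
      rw [e2, e3]
      have : (0:ℝ) < (2:ℝ) ^ (-δ) := Real.rpow_pos_of_pos (by norm_num) _
      nlinarith
    have h6 : R * (i2 * (2:ℝ) ^ (-δ)) < R * R ^ δ := by
      have := lt_of_lt_of_le h5 h4
      nlinarith
    have h7 : r ≤ R * (i2 * (2:ℝ) ^ (-δ)) := by
      -- r = l * i2 / n ≤ (l/4) * i2 * 2^{-δ} ≤ R * i2 * 2^{-δ}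
      have hinv : (n:ℝ)⁻¹ ≤ (2:ℝ) ^ (-(δ+2)) := by
        have : ((n:ℝ))⁻¹ = (2:ℝ) ^ (-(k:ℝ)) := by
          rw [hnR, ← Real.rpow_natCast (2:ℝ) k, ← Real.rpow_neg (by norm_num : (0:ℝ) ≤ 2)]
        rw [this]
        exact Real.rpow_le_rpow_of_exponent_le (by norm_num) (by linarith)
      have he : (2:ℝ) ^ (-(δ+2)) = (2:ℝ) ^ (-δ) / 4 := by
        rw [show (-(δ+2)) = (-δ) + (-2) by ring, Real.rpow_add (by norm_num : (0:ℝ) < 2)]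
        have : (2:ℝ) ^ (-(2:ℝ)) = 1/4 := by
          rw [Real.rpow_neg (by norm_num : (0:ℝ) ≤ 2),
            show ((2:ℝ):ℝ) = ((2:ℕ):ℝ) by norm_num, Real.rpow_natCast]
          norm_num
        rw [this]; ring
      have : r = l * i2 * (n:ℝ)⁻¹ := by rw [hr]; ring
      rw [this]
      calc l * i2 * (n:ℝ)⁻¹ ≤ l * i2 * ((2:ℝ) ^ (-δ) / 4) := by
            rw [← he]
            exact mul_le_mul_of_nonneg_left hinv (by positivity)
        _ = (l/4) * (i2 * (2:ℝ) ^ (-δ)) := by ring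
        _ ≤ R * (i2 * (2:ℝ) ^ (-δ)) := by
            have h9 : (0:ℝ) ≤ i2 * (2:ℝ) ^ (-δ) := by
              have : (0:ℝ) < (2:ℝ) ^ (-δ) := Real.rpow_pos_of_pos (by norm_num) _
              positivity
            exact mul_le_mul_of_nonneg_right hRge h9
    rw [e1]
    exact lt_of_le_of_lt h7 h6
  -- R/r lower bound
  have hRr2 : (2:ℝ) ^ ((m:ℝ) + k - 2) ≤ R / r := by
    have hrpos := hr0
    have e1 : R / r = (1/2 - i2) * ((2:ℝ)^m * (2:ℝ)^k) := by
      rw [hR, hr, hi2, hnR]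
      field_simp
    have e2 : (2:ℝ) ^ ((m:ℝ) + k - 2) = ((2:ℝ)^m * (2:ℝ)^k) / 4 := by
      rw [show ((m:ℝ) + k - 2) = (m:ℝ) + (k:ℝ) + (-2) by ring,
        Real.rpow_add (by norm_num : (0:ℝ) < 2), Real.rpow_add (by norm_num : (0:ℝ) < 2)]
      have h24 : (2:ℝ) ^ (-(2:ℝ)) = 1/4 := by
        rw [Real.rpow_neg (by norm_num : (0:ℝ) ≤ 2),
          show ((2:ℝ):ℝ) = ((2:ℕ):ℝ) by norm_num, Real.rpow_natCast]
        norm_num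
      rw [Real.rpow_natCast, Real.rpow_natCast, h24]
      ring
    rw [e1, e2]
    have hp : (0:ℝ) < (2:ℝ)^m * (2:ℝ)^k := by positivity
    nlinarith
  -- start estimating
  refine iSup_le fun ε => ?_
  rw [miniMeasure_apply (A := centralCube d m ε) (by exact measurableSet_Icc)
    (centralCube_subset_Icc hm1 ε)]
  by_cases hc0 : μ (miniMap d l u ⁻¹' centralCube d m ε) = 0
  · rw [hc0, mul_zero]; exact zero_le
  set a : Fin d → ℝ := fun i => if ε i then (1:ℝ)/2 else 1/2 - i2 with ha
  set b : Fin d → ℝ := fun i => if ε i then (1:ℝ)/2 + i2 else 1/2 with hb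
  have hcc : miniMap d l u ⁻¹' centralCube d m ε =
      Icc (fun i => l * (a i - u i)) (fun i => l * (b i - u i)) := miniMap_preimage_Icc hl0 a b
  set A : Fin d → ℝ := fun i => l * (a i - u i) with hA
  have hab : ∀ i, b i - a i = i2 := by
    intro i
    by_cases h : ε i <;> simp [ha, hb, h] <;> ring
  have ha_lb : ∀ i, 1/2 - i2 ≤ a i := by
    intro i; by_cases h : ε i <;> simp [ha, h] <;> linarith
  have hb_ub : ∀ i, b i ≤ 1/2 + i2 := by
    intro i; by_cases h : ε i <;> simp [hb, h] <;> linarith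
  set σ : ℝ := l * i2 / n with hσ
  have hσ0 : 0 < σ := by positivity
  have hupper_eq : (fun i => l * (b i - u i)) = fun i => A i + (n:ℝ) * σ := by
    ext i
    have := hab i
    rw [hA, hσ]
    field_simp
    nlinarith [hab i]
  -- covering and pigeonhole
  obtain ⟨v, hv⟩ := measure_le_card_mul_max (ν := μ)
    (S := fun v : Fin d → Fin n =>
      Icc (fun i => A i + σ * (v i)) (fun i => A i + σ * ((v i) + 1)))
    (A := Icc A (fun i => A i + (n:ℝ) * σ)) (cube_subset_iUnion hσ0.le hnpos)
  have hcard : (Fintype.card (Fin d → Fin n) : ℝ≥0∞) = ((n:ℝ≥0∞)) ^ d := by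
    rw [Fintype.card_fun]
    push_cast
    simp
  have hcstar : μ (miniMap d l u ⁻¹' centralCube d m ε) ≤
      ((n:ℝ≥0∞)) ^ d * μ (Icc (fun i => A i + σ * (v i)) (fun i => A i + σ * ((v i) + 1))) := by
    rw [hcc, hupper_eq, ← hcard]
    exact hv
  have hsub0 : μ (Icc (fun i => A i + σ * (v i)) (fun i => A i + σ * ((v i) + 1))) ≠ 0 := by
    intro h0
    rw [h0, mul_zero] at hcstar
    exact hc0 (le_antisymm hcstar (zero_le))
  obtain ⟨y, hy_mem, hy_supp⟩ := exists_msupport hsub0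
  -- the subcube is inside the ball of radius σ = r around y
  have hsubball : Icc (fun i => A i + σ * (v i)) (fun i => A i + σ * ((v i) + 1)) ⊆
      Metric.closedBall y σ := by
    intro z hz
    rw [Metric.mem_closedBall]
    rw [dist_pi_le_iff hσ0.le]
    intro i
    have h1 := hz.1 i
    have h2 := hz.2 i
    have h3 := hy_mem.1 i
    have h4 := hy_mem.2 i
    dsimp only at h1 h2 h3 h4
    rw [Real.dist_eq, abs_le]
    constructor <;> nlinarith
  -- y is in the central pullback cube
  have hy_cube : ∀ i, A i ≤ y i ∧ y i ≤ A i + l * i2 := by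
    intro i
    have h3 := hy_mem.1 i
    have h4 := hy_mem.2 i
    dsimp only at h3 h4
    have hv1 : (0:ℝ) ≤ (v i : ℝ) := by positivity
    have hv2 : ((v i : ℝ) + 1) ≤ (n:ℝ) := by
      have := (v i).2
      have : ((v i : ℕ) : ℝ) + 1 ≤ (n:ℝ) := by exact_mod_cast Nat.succ_le_of_lt this
      exact this
    constructor
    · nlinarith
    · have : σ * ((v i : ℝ) + 1) ≤ σ * n := by nlinarith
      have hσn : σ * n = l * i2 := by
        rw [hσ]; field_simp
      nlinarith
  -- the ball of radius R around y is inside Q'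
  have hballQ : Metric.closedBall y R ⊆ miniMap d l u ⁻¹' (Icc 0 1) := by
    rw [miniMap_preimage_Icc hl0]
    intro z hz
    rw [Metric.mem_closedBall] at hz
    constructor <;> intro i <;>
      have hzi : |z i - y i| ≤ R := by
        rw [← Real.dist_eq]
        exact le_trans (dist_le_pi_dist z y i) hz
    · have h1 := (hy_cube i).1
      have h2 := ha_lb i
      have h3 := abs_le.1 hzi
      show l * ((0:Fin d → ℝ) i - u i) ≤ z i
      have hAi : A i = l * (a i - u i) := rfl
      simp only [Pi.zero_apply]
      nlinarith [mul_le_mul_of_nonneg_left h2 hl0.le]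
    · have h1 := (hy_cube i).2
      have h2 := hb_ub i
      have h3 := abs_le.1 hzi
      show z i ≤ l * ((1:Fin d → ℝ) i - u i)
      have hAi : A i = l * (a i - u i) := rfl
      have hab' := hab i
      simp only [Pi.one_apply]
      nlinarith [mul_le_mul_of_nonneg_left h2 hl0.le]
  -- apply the hypothesis H at y
  have Happ := H y hy_supp r R hr0 hrR hRd hR1
  have hBr0 : μ (Metric.closedBall y r) ≠ 0 := (hy_supp r hr0).ne'
  set D : ℝ≥0∞ := ENNReal.ofReal (C * (R / r) ^ s) with hD
  have hDpos : 0 < C * (R / r) ^ s := by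
    have : (0:ℝ) < (R/r) ^ s := Real.rpow_pos_of_pos (by positivity) _
    positivity
  have hD0 : D ≠ 0 := by
    rw [hD]
    simpa using hDpos
  have hDtop : D ≠ ⊤ := ENNReal.ofReal_ne_top
  have hDmul : D * μ (Metric.closedBall y r) ≤ μ (Metric.closedBall y R) := by
    rw [← ENNReal.le_div_iff_mul_le (Or.inl hBr0) (Or.inl (measure_ne_top μ _))]
    exact Happ
  have hBr_le : μ (Metric.closedBall y r) ≤ D⁻¹ * μ (Metric.closedBall y R) := by
    calc μ (Metric.closedBall y r) = D⁻¹ * (D * μ (Metric.closedBall y r)) := by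
          rw [← mul_assoc, ENNReal.inv_mul_cancel hD0 hDtop, one_mul]
      _ ≤ D⁻¹ * μ (Metric.closedBall y R) := mul_le_mul_right hDmul _
  -- put everything together
  have hfinal : (μ (miniMap d l u ⁻¹' (Icc 0 1)))⁻¹ * μ (miniMap d l u ⁻¹' centralCube d m ε) ≤
      ((n:ℝ≥0∞)) ^ d * D⁻¹ := by
    calc (μ (miniMap d l u ⁻¹' (Icc 0 1)))⁻¹ * μ (miniMap d l u ⁻¹' centralCube d m ε)
        ≤ (μ (miniMap d l u ⁻¹' (Icc 0 1)))⁻¹ *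
            (((n:ℝ≥0∞)) ^ d * (D⁻¹ * μ (miniMap d l u ⁻¹' (Icc 0 1)))) := by
          refine mul_le_mul_right ?_ _
          refine le_trans hcstar (mul_le_mul_right ?_ _)
          refine le_trans (measure_mono hsubball) ?_
          refine le_trans hBr_le (mul_le_mul_right (measure_mono hballQ) _)
      _ = ((n:ℝ≥0∞)) ^ d * D⁻¹ *
            ((μ (miniMap d l u ⁻¹' (Icc 0 1)))⁻¹ * μ (miniMap d l u ⁻¹' (Icc 0 1))) := by
          ring
      _ = ((n:ℝ≥0∞)) ^ d * D⁻¹ := by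
          rw [ENNReal.inv_mul_cancel hQ0 hQtop, mul_one]
  refine le_trans hfinal ?_
  -- final real computation
  have hcast : ((n:ℝ≥0∞)) ^ d = ENNReal.ofReal ((n:ℝ) ^ d) := by
    rw [ENNReal.ofReal_pow (by positivity)]
    congr 1
    simp [ENNReal.ofReal_natCast]
  have hDinv : D⁻¹ = ENNReal.ofReal ((C * (R / r) ^ s)⁻¹) := by
    rw [hD, ← ENNReal.ofReal_inv_of_pos hDpos]
  rw [hcast, hDinv, ← ENNReal.ofReal_mul (by positivity)]
  refine ENNReal.ofReal_le_ofReal ?_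
  have hRrs : (2:ℝ) ^ (((m:ℝ) + k - 2) * s) ≤ (R / r) ^ s := by
    rw [Real.rpow_mul (by norm_num : (0:ℝ) ≤ 2)]
    exact Real.rpow_le_rpow (Real.rpow_nonneg (by norm_num) _) hRr2 hs.le
  have hpow_pos : (0:ℝ) < (2:ℝ) ^ (((m:ℝ) + k - 2) * s) := Real.rpow_pos_of_pos (by norm_num) _
  have hinv_le : ((R / r) ^ s)⁻¹ ≤ (2:ℝ) ^ (-(((m:ℝ) + k - 2) * s)) := by
    rw [Real.rpow_neg (by norm_num : (0:ℝ) ≤ 2)]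
    exact inv_anti₀ hpow_pos hRrs
  have hrs_pos : (0:ℝ) < (R / r) ^ s := Real.rpow_pos_of_pos (by positivity) _
  calc (n:ℝ) ^ d * (C * (R / r) ^ s)⁻¹ = (n:ℝ) ^ d * C⁻¹ * ((R / r) ^ s)⁻¹ := by
        rw [mul_inv]; ring
    _ ≤ (n:ℝ) ^ d * C⁻¹ * (2:ℝ) ^ (-(((m:ℝ) + k - 2) * s)) := by
        refine mul_le_mul_of_nonneg_left hinv_le (by positivity)
    _ = ((2:ℝ) ^ k) ^ d * C⁻¹ * (2:ℝ) ^ (-(((m:ℝ) + k - 2) * s)) := by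
        rw [hnR]

end Dir1

section Dir2
variable [IsProbabilityMeasure μ]

set_option maxHeartbeats 1600000 in
lemma admissible_of_dagger (hδ : 0 < δ) {t : ℝ} (ht : 0 < t) {M : ℕ} (hM : δ + 1 ≤ (M:ℝ))
    (HD : ∀ m : ℕ, M ≤ m → ∀ x ∈ msupport d μ, ∀ l : ℝ, 0 < l → l ≤ 1 →
      2 * (2:ℝ) ^ (-(m : ℝ)/δ) < l →
      μ (Metric.closedBall x (l * ((2:ℝ) ^ m)⁻¹)) ≤
        (2 ^ d : ℝ≥0∞) * (ENNReal.ofReal ((2:ℝ) ^ ((m:ℝ) * t)))⁻¹ *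
          μ (Metric.closedBall x (l / 2))) :
    ∃ C : ℝ, 0 < C ∧ ∀ x ∈ msupport d μ, ∀ r R : ℝ,
      0 < r → r < R ^ (1 + δ) → R ^ (1 + δ) < R → R < 1 →
      ENNReal.ofReal (C * (R / r) ^ t) ≤
        μ (Metric.closedBall x R) / μ (Metric.closedBall x r) := by
  set C : ℝ := min ((2:ℝ) ^ (-(t + (d:ℝ)))) ((2:ℝ) ^ (-(((M:ℝ) + 1) * t))) with hCdef
  have hC0 : 0 < C := lt_min (Real.rpow_pos_of_pos two_pos _) (Real.rpow_pos_of_pos two_pos _)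
  refine ⟨C, hC0, ?_⟩
  intro x hx r R hr0 hrR hRd hR1
  have hR0 : 0 < R := lt_trans (lt_trans hr0 hrR) hRd
  have hrltR : r < R := lt_trans hrR hRd
  have hBr0 : μ (Metric.closedBall x r) ≠ 0 := (hx r hr0).ne'
  have hBrtop : μ (Metric.closedBall x r) ≠ ⊤ := measure_ne_top μ _
  rw [ENNReal.le_div_iff_mul_le (Or.inl hBr0) (Or.inl hBrtop)]
  set l : ℝ := min (2 * R) 1 with hldef
  have hl0 : 0 < l := lt_min (by linarith) one_pos
  have hl1 : l ≤ 1 := min_le_right _ _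
  have hl2R : l / 2 ≤ R := by
    have := min_le_left (2 * R) 1
    linarith
  have hlr : r < l := lt_min (by linarith) (by linarith)
  have hRleL : R ≤ l := by
    rcases le_total (2 * R) 1 with h | h
    · rw [hldef, min_eq_left h]; linarith
    · rw [hldef, min_eq_right h]; linarith
  have hlr1 : 1 < l / r := (one_lt_div hr0).2 hlr
  have hlr0 : 0 < l / r := by positivity
  set m : ℕ := ⌊Real.logb 2 (l / r)⌋₊ with hm
  have hfl : (m : ℝ) ≤ Real.logb 2 (l / r) :=
    Nat.floor_le (Real.logb_nonneg one_lt_two hlr1.le)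
  have hfl2 : Real.logb 2 (l / r) < (m : ℝ) + 1 := Nat.lt_floor_add_one _
  have hrlog : (2:ℝ) ^ (Real.logb 2 (l / r)) = l / r := Real.rpow_logb two_pos (by norm_num) hlr0
  have h2m : (2:ℝ) ^ (m:ℝ) ≤ l / r := by
    rw [← hrlog]
    exact Real.rpow_le_rpow_of_exponent_le one_le_two hfl
  have h2m1 : l / r < (2:ℝ) ^ ((m:ℝ) + 1) := by
    rw [← hrlog]
    exact Real.rpow_lt_rpow_of_exponent_lt one_lt_two hfl2
  have h2mnat : (2:ℝ) ^ ((m:ℕ):ℝ) = (2:ℝ) ^ (m:ℕ) := Real.rpow_natCast 2 m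
  have h2mpos : (0:ℝ) < (2:ℝ) ^ ((m:ℕ):ℝ) := Real.rpow_pos_of_pos two_pos _
  have hrle : r ≤ l * ((2:ℝ) ^ (m:ℕ))⁻¹ := by
    have h5 : (2:ℝ) ^ ((m:ℕ):ℝ) * r ≤ l := (le_div_iff₀ hr0).1 h2m
    rw [← h2mnat]
    calc r = ((2:ℝ) ^ ((m:ℕ):ℝ) * r) * ((2:ℝ) ^ ((m:ℕ):ℝ))⁻¹ := by field_simp
    _ ≤ l * ((2:ℝ) ^ ((m:ℕ):ℝ))⁻¹ := by gcongr
  have hrgt : l < (2:ℝ) ^ ((m:ℝ) + 1) * r := (div_lt_iff₀ hr0).1 h2m1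
  have h2msucc : (2:ℝ) ^ ((m:ℝ) + 1) = (2:ℝ) ^ ((m:ℕ):ℝ) * 2 := by
    rw [Real.rpow_add two_pos, Real.rpow_one]
  have hRr1 : 1 < R / r := (one_lt_div hr0).2 hrltR
  have hRrub : R / r < (2:ℝ) ^ ((m:ℝ) + 1) := by
    calc R / r ≤ l / r := by gcongr
    _ < (2:ℝ) ^ ((m:ℝ) + 1) := h2m1
  have hRrt : (R / r) ^ t ≤ (2:ℝ) ^ (((m:ℝ) + 1) * t) := by
    have h1 : (R / r) ^ t ≤ ((2:ℝ) ^ ((m:ℝ) + 1)) ^ t :=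
      Real.rpow_le_rpow (by positivity) hRrub.le ht.le
    rwa [← Real.rpow_mul (by norm_num : (0:ℝ) ≤ 2)] at h1
  by_cases hcase : M ≤ m
  · -- main case : use the doubling-type estimate HD
    have hth : 2 * (2:ℝ) ^ (-(m : ℝ)/δ) < l := by
      rcases le_total (2 * R) 1 with h | h
      · -- l = 2R
        have hleq : l = 2 * R := by rw [hldef, min_eq_left h]
        have hs1 : R < r * (2:ℝ) ^ ((m:ℕ):ℝ) := by
          rw [hleq] at hrgt
          rw [h2msucc] at hrgt
          nlinarith
        have hs2 : (2:ℝ) ^ (-((m:ℕ):ℝ)) < r / R := by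
          rw [Real.rpow_neg (by norm_num : (0:ℝ) ≤ 2), lt_div_iff₀ hR0]
          calc ((2:ℝ) ^ ((m:ℕ):ℝ))⁻¹ * R <
              ((2:ℝ) ^ ((m:ℕ):ℝ))⁻¹ * (r * (2:ℝ) ^ ((m:ℕ):ℝ)) :=
            mul_lt_mul_of_pos_left hs1 (by positivity)
          _ = r := by field_simp
        have hs3 : r / R < R ^ δ := by
          rw [div_lt_iff₀ hR0]
          have e : R ^ (1 + δ) = R * R ^ δ := by
            rw [Real.rpow_add hR0, Real.rpow_one]
          nlinarith [hrR, e]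
        have hs4 : (2:ℝ) ^ (-((m:ℕ):ℝ)) < R ^ δ := lt_trans hs2 hs3
        have hs5 : (2:ℝ) ^ (-(m : ℝ)/δ) < R := by
          have h6 : ((2:ℝ) ^ (-((m:ℕ):ℝ))) ^ δ⁻¹ < (R ^ δ) ^ δ⁻¹ :=
            Real.rpow_lt_rpow (Real.rpow_nonneg (by norm_num) _) hs4 (inv_pos.2 hδ)
          have e1 : ((2:ℝ) ^ (-((m:ℕ):ℝ))) ^ δ⁻¹ = (2:ℝ) ^ (-(m : ℝ)/δ) := by
            rw [← Real.rpow_mul (by norm_num : (0:ℝ) ≤ 2), div_eq_mul_inv]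
          have e2 : (R ^ δ) ^ δ⁻¹ = R := by
            rw [← Real.rpow_mul hR0.le, mul_inv_cancel₀ hδ.ne', Real.rpow_one]
          rwa [e1, e2] at h6
        rw [hleq]
        linarith
      · -- l = 1
        have hleq : l = 1 := by rw [hldef, min_eq_right h]
        have hmδ : δ < (m:ℝ) := by
          have : (M:ℝ) ≤ (m:ℝ) := by exact_mod_cast hcase
          linarith
        have : (2:ℝ) ^ (-(m : ℝ)/δ) < (2:ℝ) ^ (-(1:ℝ)) := by
          apply Real.rpow_lt_rpow_of_exponent_lt one_lt_two
          rw [div_lt_iff₀ hδ]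
          nlinarith
        have h12 : (2:ℝ) ^ (-(1:ℝ)) = 1/2 := by
          rw [Real.rpow_neg_one]
          norm_num
        rw [hleq]
        rw [h12] at this
        linarith
    have hkey := HD m hcase x hx l hl0 hl1 hth
    have hkey' : μ (Metric.closedBall x r) ≤
        (2 ^ d : ℝ≥0∞) * (ENNReal.ofReal ((2:ℝ) ^ ((m:ℝ) * t)))⁻¹ *
          μ (Metric.closedBall x R) := by
      refine le_trans (measure_mono (Metric.closedBall_subset_closedBall hrle)) ?_
      refine le_trans hkey ?_
      exact mul_le_mul_right (measure_mono (Metric.closedBall_subset_closedBall hl2R)) _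
    have h2dE : ((2:ℝ≥0∞) ^ d) = ENNReal.ofReal ((2:ℝ) ^ (d:ℕ)) := by
      rw [ENNReal.ofReal_pow (by norm_num : (0:ℝ) ≤ 2)]
      norm_num
    have hreal : C * (R / r) ^ t * (2:ℝ) ^ (d:ℕ) ≤ (2:ℝ) ^ ((m:ℝ) * t) := by
      have h1 : C ≤ (2:ℝ) ^ (-(t + (d:ℝ))) := min_le_left _ _
      have h3 : (2:ℝ) ^ (d:ℕ) = (2:ℝ) ^ ((d:ℕ):ℝ) := (Real.rpow_natCast 2 d).symm
      have e : (2:ℝ) ^ (-(t + (d:ℝ))) * (2:ℝ) ^ (((m:ℝ) + 1) * t) * (2:ℝ) ^ ((d:ℕ):ℝ) =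
          (2:ℝ) ^ ((m:ℝ) * t) := by
        rw [← Real.rpow_add two_pos, ← Real.rpow_add two_pos]
        congr 1
        ring
      calc C * (R / r) ^ t * (2:ℝ) ^ (d:ℕ) ≤
          (2:ℝ) ^ (-(t + (d:ℝ))) * (2:ℝ) ^ (((m:ℝ) + 1) * t) * (2:ℝ) ^ (d:ℕ) := by
            have hnn : (0:ℝ) ≤ (R / r) ^ t := Real.rpow_nonneg (by positivity) _
            have hp2 : (0:ℝ) ≤ (2:ℝ) ^ (d:ℕ) := by positivity
            have := mul_le_mul (mul_le_mul h1 hRrt hnn (Real.rpow_nonneg (by norm_num) _))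
              (le_refl ((2:ℝ) ^ (d:ℕ))) hp2 (by positivity)
            exact this
      _ = (2:ℝ) ^ ((m:ℝ) * t) := by rw [h3, e]
    have hco : ENNReal.ofReal (C * (R / r) ^ t) * (2 ^ d : ℝ≥0∞) ≤
        ENNReal.ofReal ((2:ℝ) ^ ((m:ℝ) * t)) := by
      rw [h2dE, ← ENNReal.ofReal_mul (by positivity)]
      exact ENNReal.ofReal_le_ofReal hreal
    have hP0 : ENNReal.ofReal ((2:ℝ) ^ ((m:ℝ) * t)) ≠ 0 := by
      simp only [ne_eq, ENNReal.ofReal_eq_zero, not_le]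
      positivity
    have hPtop : ENNReal.ofReal ((2:ℝ) ^ ((m:ℝ) * t)) ≠ ⊤ := ENNReal.ofReal_ne_top
    calc ENNReal.ofReal (C * (R / r) ^ t) * μ (Metric.closedBall x r)
        ≤ ENNReal.ofReal (C * (R / r) ^ t) *
            ((2 ^ d : ℝ≥0∞) * (ENNReal.ofReal ((2:ℝ) ^ ((m:ℝ) * t)))⁻¹ *
              μ (Metric.closedBall x R)) := mul_le_mul_right hkey' _
      _ = (ENNReal.ofReal (C * (R / r) ^ t) * (2 ^ d : ℝ≥0∞)) *
            ((ENNReal.ofReal ((2:ℝ) ^ ((m:ℝ) * t)))⁻¹ * μ (Metric.closedBall x R)) := by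
          ring
      _ ≤ ENNReal.ofReal ((2:ℝ) ^ ((m:ℝ) * t)) *
            ((ENNReal.ofReal ((2:ℝ) ^ ((m:ℝ) * t)))⁻¹ * μ (Metric.closedBall x R)) :=
          mul_le_mul_left hco _
      _ = (ENNReal.ofReal ((2:ℝ) ^ ((m:ℝ) * t)) *
            (ENNReal.ofReal ((2:ℝ) ^ ((m:ℝ) * t)))⁻¹) * μ (Metric.closedBall x R) := by
          ring
      _ = μ (Metric.closedBall x R) := by
          rw [ENNReal.mul_inv_cancel hP0 hPtop, one_mul]
  · push_neg at hcase
    have hm1M : (m:ℝ) + 1 ≤ (M:ℝ) := by exact_mod_cast hcase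
    have hCle : C ≤ (2:ℝ) ^ (-(((M:ℝ) + 1) * t)) := min_le_right _ _
    have hle1 : C * (R / r) ^ t ≤ 1 := by
      have h2 : C * (R / r) ^ t ≤
          (2:ℝ) ^ (-(((M:ℝ)+1) * t)) * (2:ℝ) ^ (((m:ℝ)+1) * t) :=
        mul_le_mul hCle hRrt (Real.rpow_nonneg (by positivity) _)
          (Real.rpow_nonneg (by norm_num) _)
      have h3 : (2:ℝ) ^ (-(((M:ℝ)+1) * t)) * (2:ℝ) ^ (((m:ℝ)+1) * t) =
          (2:ℝ) ^ (((m:ℝ)+1) * t - ((M:ℝ)+1)*t) := by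
        rw [← Real.rpow_add two_pos]
        congr 1
        ring
      have h4 : (2:ℝ) ^ (((m:ℝ)+1) * t - ((M:ℝ)+1)*t) ≤ 1 := by
        apply Real.rpow_le_one_of_one_le_of_nonpos one_le_two
        nlinarith
      calc C * (R / r) ^ t ≤ _ := h2
      _ = _ := h3
      _ ≤ 1 := h4
    calc ENNReal.ofReal (C * (R / r) ^ t) * μ (Metric.closedBall x r)
        ≤ 1 * μ (Metric.closedBall x r) := mul_le_mul_left (ENNReal.ofReal_le_one.2 hle1) _
      _ = μ (Metric.closedBall x r) := one_mul _
      _ ≤ μ (Metric.closedBall x R) :=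
          measure_mono (Metric.closedBall_subset_closedBall hrltR.le)

end Dir2

section Assemble
variable [IsProbabilityMeasure μ]

lemma Mctr_le_one {m : ℕ} : Mctr d (miniMeasure d μ l u) m ≤ 1 := by
  refine iSup_le fun ε => ?_
  refine le_trans (measure_mono (subset_univ _)) ?_
  rw [miniMeasure, Measure.smul_apply, Measure.restrict_apply_univ, smul_eq_mul]
  rcases eq_or_ne ((μ.map (miniMap d l u)) (Icc 0 1)) 0 with h | h
  · rw [h, mul_zero]
    exact zero_le_one
  · have htop : (μ.map (miniMap d l u)) (Icc 0 1) ≠ ⊤ := by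
      rw [map_miniMap_apply measurableSet_Icc]
      exact measure_ne_top μ _
    rw [ENNReal.inv_mul_cancel h htop]

lemma one_le_hstar {m : ℕ} : 1 ≤ hstar d μ δ m := by
  refine le_iInf fun l => le_iInf fun u => le_iInf fun _ => ?_
  rw [← inv_one]
  exact ENNReal.inv_le_inv' Mctr_le_one

lemma dir2 (hδ : 0 < δ) :
    Filter.liminf (fun m : ℕ => log2 (hstar d μ δ m) / (m : ℝ≥0∞)) Filter.atTop ≤
      hfun d μ δ := by
  by_contra hcon
  push_neg at hcon
  obtain ⟨b, hb1, hb2⟩ := exists_between hcon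
  have hbtop : b ≠ ⊤ := hb2.ne_top
  have hb0 : b ≠ 0 := by
    intro h
    rw [h] at hb1
    exact absurd hb1 (by simp)
  set t : ℝ := b.toReal with htdef
  have ht : 0 < t := ENNReal.toReal_pos hb0 hbtop
  have hev := Filter.eventually_lt_of_lt_liminf hb2
  obtain ⟨M₀, hM₀⟩ := Filter.eventually_atTop.1 hev
  set M : ℕ := max M₀ (max 1 (⌈δ⌉₊ + 1)) with hMdef
  have hM1 : 1 ≤ M := le_trans (le_max_left 1 _) (le_max_right _ _)
  have hMδ : δ + 1 ≤ (M:ℝ) := by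
    have h1 : (⌈δ⌉₊ + 1 : ℕ) ≤ M := le_trans (le_max_right 1 _) (le_max_right _ _)
    have h2 : ((⌈δ⌉₊ + 1 : ℕ) : ℝ) ≤ (M:ℝ) := by exact_mod_cast h1
    push_cast at h2
    linarith [Nat.le_ceil δ]
  -- lower bound on hstar for m ≥ M
  have hstar_ge : ∀ m : ℕ, M ≤ m →
      ENNReal.ofReal ((2:ℝ) ^ ((m:ℝ) * t)) ≤ hstar d μ δ m := by
    intro m hm
    have hm1 : 1 ≤ m := le_trans hM1 hm
    have hflt := hM₀ m (le_trans (le_max_left _ _) hm)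
    have hmul : b * (m : ℝ≥0∞) ≤ log2 (hstar d μ δ m) := by
      calc b * (m : ℝ≥0∞) ≤ log2 (hstar d μ δ m) / (m : ℝ≥0∞) * (m : ℝ≥0∞) :=
            mul_le_mul_left hflt.le _
      _ = (m : ℝ≥0∞) * (log2 (hstar d μ δ m) / (m : ℝ≥0∞)) := mul_comm _ _
      _ ≤ log2 (hstar d μ δ m) := ENNReal.mul_div_le
    have hofm : b * (m : ℝ≥0∞) = ENNReal.ofReal ((m:ℝ) * t) := by
      conv_lhs => rw [← ENNReal.ofReal_toReal hbtop, ← ENNReal.ofReal_natCast m]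
      rw [← ENNReal.ofReal_mul ht.le, mul_comm]
    by_cases hT : hstar d μ δ m = ⊤
    · rw [hT]; exact le_top
    have hX1 : (1:ℝ) ≤ (hstar d μ δ m).toReal := by
      have := ENNReal.toReal_mono hT (one_le_hstar (δ := δ) (m := m))
      simpa using this
    have hX0 : (0:ℝ) < (hstar d μ δ m).toReal := by linarith
    rw [log2, if_neg hT, hofm] at hmul
    have hlog : (m:ℝ) * t ≤ Real.logb 2 (hstar d μ δ m).toReal := by
      by_contra hco
      push_neg at hco
      have h5 := (ENNReal.ofReal_le_ofReal_iff (Real.logb_nonneg one_lt_two hX1)).1 hmul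
      linarith
    have h6 : (2:ℝ) ^ ((m:ℝ) * t) ≤ (hstar d μ δ m).toReal :=
      (Real.le_logb_iff_rpow_le one_lt_two hX0).1 hlog
    calc ENNReal.ofReal ((2:ℝ) ^ ((m:ℝ) * t)) ≤ ENNReal.ofReal (hstar d μ δ m).toReal :=
          ENNReal.ofReal_le_ofReal h6
    _ = hstar d μ δ m := ENNReal.ofReal_toReal hT
  -- the doubling estimate
  have HD : ∀ m : ℕ, M ≤ m → ∀ x ∈ msupport d μ, ∀ l : ℝ, 0 < l → l ≤ 1 →
      2 * (2:ℝ) ^ (-(m : ℝ)/δ) < l →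
      μ (Metric.closedBall x (l * ((2:ℝ) ^ m)⁻¹)) ≤
        (2 ^ d : ℝ≥0∞) * (ENNReal.ofReal ((2:ℝ) ^ ((m:ℝ) * t)))⁻¹ *
          μ (Metric.closedBall x (l / 2)) := by
    intro m hm x hx l hl0 hl1 hth
    exact dagger hδ (le_trans hM1 hm) (hstar_ge m hm) hx hl0 hl1 hth
  obtain ⟨C, hCpos, hCadm⟩ := admissible_of_dagger hδ ht hMδ HD
  have hle : ENNReal.ofReal t ≤ hfun d μ δ := by
    rw [hfun]
    refine le_trans ?_ (le_iSup _ t)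
    exact le_iSup_of_le ⟨C, hCpos, hCadm⟩ le_rfl
  rw [ENNReal.ofReal_toReal hbtop] at hle
  exact absurd (lt_of_lt_of_le hb1 hle) (lt_irrefl _)

end Assemble

section Final
variable [IsProbabilityMeasure μ]

lemma dir1 (hδ : 0 < δ) :
    hfun d μ δ ≤
      Filter.liminf (fun m : ℕ => log2 (hstar d μ δ m) / (m : ℝ≥0∞)) Filter.atTop := by
  rw [hfun]
  refine iSup_le fun s => iSup_le fun hadm => ?_
  rcases le_or_gt s 0 with hs0 | hs0
  · have : ENNReal.ofReal s = 0 := ENNReal.ofReal_eq_zero.2 hs0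
    rw [this]
    exact zero_le
  obtain ⟨C, hC, H⟩ := hadm
  set k : ℕ := ⌈δ⌉₊ + 3 with hkdef
  have hk : δ + 2 ≤ (k:ℝ) := by
    have h1 := Nat.le_ceil δ
    rw [hkdef]
    push_cast
    linarith
  set Kc : ℝ := ((2:ℝ)^k)^d * C⁻¹ with hKc
  have hKc0 : 0 < Kc := by positivity
  have hsb : ∀ m : ℕ, 2 ≤ m →
      ENNReal.ofReal ((Kc * (2:ℝ) ^ (-(((m:ℝ) + k - 2) * s)))⁻¹) ≤ hstar d μ δ m := by
    intro m hm2
    refine le_iInf fun l => le_iInf fun u => le_iInf fun hc => ?_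
    obtain ⟨hl0, hl1, hth, hQ, hMne⟩ := hc
    have hQ0 : μ (miniMap d l u ⁻¹' Icc 0 1) ≠ 0 := by
      rw [← map_miniMap_apply measurableSet_Icc]
      exact hQ.ne'
    have hb := Mctr_le hδ hs0 hC H hk hm2 hl0 hl1 hth hQ0
    have hE0 : 0 < Kc * (2:ℝ) ^ (-(((m:ℝ) + k - 2) * s)) := by positivity
    rw [ENNReal.ofReal_inv_of_pos hE0]
    refine ENNReal.inv_le_inv' ?_
    rw [hKc]
    exact hb
  have hlb : ∀ m : ℕ, 2 ≤ m →
      ENNReal.ofReal ((((m:ℝ) + k - 2) * s) - Real.logb 2 Kc) ≤ log2 (hstar d μ δ m) := by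
    intro m hm2
    have h1 := hsb m hm2
    by_cases hT : hstar d μ δ m = ⊤
    · rw [log2, if_pos hT]; exact le_top
    rw [log2, if_neg hT]
    refine ENNReal.ofReal_le_ofReal ?_
    have hE0 : 0 < Kc * (2:ℝ) ^ (-(((m:ℝ) + k - 2) * s)) := by positivity
    have h2 : (Kc * (2:ℝ) ^ (-(((m:ℝ) + k - 2) * s)))⁻¹ ≤ (hstar d μ δ m).toReal :=
      (ENNReal.ofReal_le_iff_le_toReal hT).1 h1
    have h3 : Real.logb 2 ((Kc * (2:ℝ) ^ (-(((m:ℝ)+k-2)*s)))⁻¹) ≤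
        Real.logb 2 (hstar d μ δ m).toReal :=
      Real.logb_le_logb_of_le one_lt_two (by positivity) h2
    refine le_trans (le_of_eq ?_) h3
    rw [Real.logb_inv, Real.logb_mul hKc0.ne' (Real.rpow_pos_of_pos two_pos _).ne',
      Real.logb_rpow two_pos (by norm_num : (2:ℝ) ≠ 1)]
    ring
  set c0 : ℝ := ((k:ℝ) - 2) * s - Real.logb 2 Kc with hc0
  have htend : Filter.Tendsto (fun m : ℕ => s + c0 / (m:ℝ)) Filter.atTop (nhds s) := by
    have h1 := tendsto_const_div_atTop_nhds_zero_nat c0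
    have h2 := Filter.Tendsto.const_add s h1
    simpa using h2
  have hev : ∀ᶠ m : ℕ in Filter.atTop, ENNReal.ofReal (s + c0 / (m:ℝ)) ≤
      log2 (hstar d μ δ m) / (m:ℝ≥0∞) := by
    filter_upwards [Filter.eventually_ge_atTop 2] with m hm2
    have hmR : (0:ℝ) < (m:ℝ) := by
      have : (2:ℝ) ≤ (m:ℝ) := by exact_mod_cast hm2
      linarith
    have heq : s + c0 / (m:ℝ) = ((((m:ℝ) + k - 2) * s) - Real.logb 2 Kc) / (m:ℝ) := by
      rw [hc0]
      field_simp
      ring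
    rw [heq, ENNReal.ofReal_div_of_pos hmR, ENNReal.ofReal_natCast m]
    exact ENNReal.div_le_div_right (hlb m hm2) _
  calc ENNReal.ofReal s =
      Filter.liminf (fun m : ℕ => ENNReal.ofReal (s + c0/(m:ℝ))) Filter.atTop :=
        ((ENNReal.tendsto_ofReal htend).liminf_eq).symm
  _ ≤ Filter.liminf (fun m : ℕ => log2 (hstar d μ δ m) / (m:ℝ≥0∞)) Filter.atTop :=
      Filter.liminf_le_liminf hev

end Final

/-- For a Borel probability measure `μ` on `[0,1]^d` and `δ > 0`,
`h(μ,δ) = liminf_{m→∞} (log₂ h*_{m,δ}(μ)) / m`. -/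
theorem stmt1 (d : ℕ) (hd : 1 ≤ d) (μ : Measure (Fin d → ℝ)) [IsProbabilityMeasure μ]
    (hsupp : μ (Set.Icc (0 : Fin d → ℝ) 1)ᶜ = 0) (δ : ℝ) (hδ : 0 < δ) :
    hfun d μ δ =
      Filter.liminf (fun m : ℕ => log2 (hstar d μ δ m) / (m : ℝ≥0∞)) Filter.atTop := by
  exact le_antisymm (dir1 hδ) (dir2 hδ)
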